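/- Let θ₁, θ₂, θ₃ ∈ (0, π/2) be real numbers with θ₁ + θ₂ + θ₃ = π. Then δ(θ₁, θ₂, θ₃) ≥ π/√12, with equality if and only if θ₁ = θ₂ = θ₃ = π/3. -/

import Mathlib

open Real

/-- The density of three mutually tangent circles of radii `tan θᵢ` (normalized so that
the inradius of the triangle of centers is `1`) inside the triangle of their centers. -/
noncomputable def triDensity (θ₁ θ₂ θ₃ : ℝ) : ℝ :=
  ((π / 2 - θ₁) * tan θ₁ ^ 2 + (π / 2 - θ₂) * tan θ₂ ^ 2 + (π / 2 - θ₃) * tan θ₃ ^ 2) /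
    (tan θ₁ + tan θ₂ + tan θ₃)

lemma arctan_aux_deriv (y : ℝ) : HasDerivAt (fun t : ℝ => arctan t - 3 * t / (t ^ 2 + 3))
    (1 / (1 + y ^ 2) - (9 - 3 * y ^ 2) / (y ^ 2 + 3) ^ 2) y := by
  have hden : (y:ℝ) ^ 2 + 3 ≠ 0 := by positivity
  have h2 : HasDerivAt (fun t : ℝ => 3 * t / (t ^ 2 + 3))
      ((3 * (y ^ 2 + 3) - 3 * y * (2 * y)) / (y ^ 2 + 3) ^ 2) y := by
    have := (((hasDerivAt_id y).const_mul 3).fun_div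
      (((hasDerivAt_id y).fun_pow 2).add_const 3) hden)
    simpa [id_eq, mul_comm] using this
  exact ((Real.hasDerivAt_arctan y).sub h2).congr_deriv (by ring)

lemma arctan_ge (x : ℝ) (hx : 0 ≤ x) : 3 * x / (x ^ 2 + 3) ≤ arctan x := by
  have hmono : MonotoneOn (fun t : ℝ => arctan t - 3 * t / (t ^ 2 + 3)) (Set.Ici 0) := by
    apply monotoneOn_of_deriv_nonneg (convex_Ici 0)
    · exact fun y _ => (arctan_aux_deriv y).continuousAt.continuousWithinAt
    · exact fun y _ => (arctan_aux_deriv y).differentiableAt.differentiableWithinAt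
    · intro y hy
      rw [(arctan_aux_deriv y).deriv, sub_nonneg, div_le_div_iff₀ (by positivity) (by positivity)]
      nlinarith [sq_nonneg y, sq_nonneg (y ^ 2)]
  have := hmono (Set.self_mem_Ici) hx hx
  simp only [Real.arctan_zero, mul_zero, zero_div, sub_zero, zero_sub, zero_pow, zero_mul] at this
  linarith

lemma key_ineq {θ : ℝ} (h0 : 0 < θ) (h2 : θ < π / 2) :
    3 * tan θ ≤ (π / 2 - θ) * (1 + 3 * tan θ ^ 2) := by
  have ht : 0 < tan θ := Real.tan_pos_of_pos_of_lt_pi_div_two h0 h2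
  have harc : π / 2 - θ = arctan (tan θ)⁻¹ := by
    rw [← Real.tan_pi_div_two_sub, Real.arctan_tan (by linarith [Real.pi_pos]) (by linarith)]
  have hb := arctan_ge (tan θ)⁻¹ (le_of_lt (inv_pos.mpr ht))
  rw [harc]
  have heq : 3 * (tan θ)⁻¹ / ((tan θ)⁻¹ ^ 2 + 3) = 3 * tan θ / (1 + 3 * tan θ ^ 2) := by
    rw [div_eq_div_iff (by positivity) (by positivity)]
    field_simp
  rw [heq, div_le_iff₀ (by positivity)] at hb
  exact hb

noncomputable def hfun (c θ : ℝ) : ℝ := (π / 2 - θ) * tan θ ^ 2 - c * tan θ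
noncomputable def hfun1 (c θ : ℝ) : ℝ :=
  -(tan θ ^ 2) + (π / 2 - θ) * (2 * tan θ * (1 + tan θ ^ 2)) - c * (1 + tan θ ^ 2)
noncomputable def hfun2 (c θ : ℝ) : ℝ :=
  2 * (1 + tan θ ^ 2) * ((π / 2 - θ) * (1 + 3 * tan θ ^ 2) - (2 + c) * tan θ)

lemma one_add_tan_sq' {θ : ℝ} (hc : cos θ ≠ 0) : 1 / cos θ ^ 2 = 1 + tan θ ^ 2 := by
  rw [Real.tan_eq_sin_div_cos]
  field_simp
  linarith [sin_sq_add_cos_sq θ]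

lemma hasDerivAt_hfun (c : ℝ) {θ : ℝ} (hc : cos θ ≠ 0) :
    HasDerivAt (hfun c) (hfun1 c θ) θ := by
  have d1 : HasDerivAt tan (1 / cos θ ^ 2) θ := Real.hasDerivAt_tan hc
  have dsq : HasDerivAt (fun t => tan t ^ 2) (2 * tan θ * (1 / cos θ ^ 2)) θ := by
    simpa using d1.fun_pow 2
  have dlin : HasDerivAt (fun t : ℝ => π / 2 - t) (-1) θ := (hasDerivAt_id θ).const_sub (π / 2)
  have := (dlin.mul dsq).sub (d1.const_mul c)
  refine this.congr_deriv ?_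
  unfold hfun1
  rw [one_add_tan_sq' hc]
  ring

lemma hasDerivAt_hfun1 (c : ℝ) {θ : ℝ} (hc : cos θ ≠ 0) :
    HasDerivAt (hfun1 c) (hfun2 c θ) θ := by
  have d1 : HasDerivAt tan (1 / cos θ ^ 2) θ := Real.hasDerivAt_tan hc
  have dsq : HasDerivAt (fun t => tan t ^ 2) (2 * tan θ * (1 / cos θ ^ 2)) θ := by
    simpa using d1.fun_pow 2
  have dlin : HasDerivAt (fun t : ℝ => π / 2 - t) (-1) θ := (hasDerivAt_id θ).const_sub (π / 2)
  have dg : HasDerivAt (fun t => 2 * tan t * (1 + tan t ^ 2))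
      (2 * (1 / cos θ ^ 2) * (1 + tan θ ^ 2) + 2 * tan θ * (2 * tan θ * (1 / cos θ ^ 2))) θ :=
    (d1.const_mul 2).mul (dsq.const_add 1)
  have := ((dsq.neg).add (dlin.mul dg)).sub ((dsq.const_add 1).const_mul c)
  refine this.congr_deriv ?_
  unfold hfun2
  rw [one_add_tan_sq' hc]
  ring

lemma sqrt12_eq : Real.sqrt 12 = 2 * Real.sqrt 3 := by
  rw [show (12:ℝ) = 2 ^ 2 * 3 by norm_num, Real.sqrt_mul (by positivity),
    Real.sqrt_sq (by norm_num)]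

lemma c_lt_one : π / Real.sqrt 12 < 1 := by
  have h1 : (3.2:ℝ) < Real.sqrt 12 := by
    rw [show (3.2:ℝ) = Real.sqrt (3.2 ^ 2) by rw [Real.sqrt_sq (by norm_num)]]
    exact Real.sqrt_lt_sqrt (by norm_num) (by norm_num)
  have h2 : π < 3.2 := by linarith [Real.pi_lt_d2]
  rw [div_lt_one (by linarith)]
  linarith

lemma c_pos : 0 < π / Real.sqrt 12 := by
  have : (0:ℝ) < Real.sqrt 12 := Real.sqrt_pos.mpr (by norm_num)
  positivity

lemma hconvex : StrictConvexOn ℝ (Set.Ioo 0 (π / 2)) (hfun (π / Real.sqrt 12)) := by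
  set c := π / Real.sqrt 12 with hc
  have hcosne : ∀ x ∈ Set.Ioo 0 (π / 2), cos x ≠ 0 := fun x hx =>
    ne_of_gt (Real.cos_pos_of_mem_Ioo ⟨by linarith [hx.1, Real.pi_pos], hx.2⟩)
  apply strictConvexOn_of_deriv2_pos (convex_Ioo _ _)
  · intro x hx
    exact (hasDerivAt_hfun c (hcosne x hx)).continuousAt.continuousWithinAt
  · intro x hx
    rw [interior_Ioo] at hx
    have hcx : cos x ≠ 0 := hcosne x hx
    have hopen : IsOpen {y : ℝ | cos y ≠ 0} :=
      isOpen_compl_singleton.preimage Real.continuous_cos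
    have heq : deriv (hfun c) =ᶠ[nhds x] hfun1 c :=
      Filter.eventuallyEq_of_mem (hopen.mem_nhds hcx) (fun y hy => (hasDerivAt_hfun c hy).deriv)
    have h2 : deriv^[2] (hfun c) x = hfun2 c x := by
      show deriv (deriv (hfun c)) x = _
      rw [heq.deriv_eq, (hasDerivAt_hfun1 c hcx).deriv]
    rw [h2]
    unfold hfun2
    have ht : 0 < tan x := Real.tan_pos_of_pos_of_lt_pi_div_two hx.1 hx.2
    have hkey := key_ineq hx.1 hx.2
    have hc1 : c < 1 := c_lt_one
    have hc0 : 0 < c := c_pos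
    have hbr : 0 < (π / 2 - x) * (1 + 3 * tan x ^ 2) - (2 + c) * tan x := by nlinarith
    positivity

lemma hfun_pi_div_three : hfun (π / Real.sqrt 12) (π / 3) = 0 := by
  unfold hfun
  rw [Real.tan_pi_div_three, sqrt12_eq]
  have h3 : (0:ℝ) < Real.sqrt 3 := Real.sqrt_pos.mpr (by norm_num)
  have hsq : Real.sqrt 3 ^ 2 = 3 := Real.sq_sqrt (by norm_num)
  field_simp
  rw [hsq]; ring

lemma mid_le {s : Set ℝ} {f : ℝ → ℝ} (cvx : ConvexOn ℝ s f) {x y : ℝ}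
    (hx : x ∈ s) (hy : y ∈ s) : f ((x + y) / 2) ≤ (f x + f y) / 2 := by
  have := cvx.2 hx hy (by norm_num : (0:ℝ) ≤ 1/2) (by norm_num : (0:ℝ) ≤ 1/2) (by norm_num)
  simp only [smul_eq_mul] at this
  calc f ((x + y) / 2) = f (1/2 * x + 1/2 * y) := by ring_nf
    _ ≤ 1/2 * f x + 1/2 * f y := this
    _ = (f x + f y) / 2 := by ring

lemma mid_lt {s : Set ℝ} {f : ℝ → ℝ} (cvx : StrictConvexOn ℝ s f) {x y : ℝ}
    (hx : x ∈ s) (hy : y ∈ s) (hne : x ≠ y) : f ((x + y) / 2) < (f x + f y) / 2 := by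
  have := cvx.2 hx hy hne (by norm_num : (0:ℝ) < 1/2) (by norm_num : (0:ℝ) < 1/2) (by norm_num)
  simp only [smul_eq_mul] at this
  calc f ((x + y) / 2) = f (1/2 * x + 1/2 * y) := by ring_nf
    _ < 1/2 * f x + 1/2 * f y := this
    _ = (f x + f y) / 2 := by ring

section Jensen
variable {θ₁ θ₂ θ₃ : ℝ}

lemma mem_thirds (h₁ : θ₁ ∈ Set.Ioo 0 (π / 2)) (h₂ : θ₂ ∈ Set.Ioo 0 (π / 2))
    (h₃ : θ₃ ∈ Set.Ioo 0 (π / 2)) :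
    (θ₁ + θ₂) / 2 ∈ Set.Ioo 0 (π / 2) ∧ (θ₃ + π / 3) / 2 ∈ Set.Ioo 0 (π / 2) ∧
      (π / 3 : ℝ) ∈ Set.Ioo 0 (π / 2) := by
  obtain ⟨a1, b1⟩ := h₁; obtain ⟨a2, b2⟩ := h₂; obtain ⟨a3, b3⟩ := h₃
  have hp := Real.pi_pos
  refine ⟨⟨by linarith, by linarith⟩, ⟨by linarith, by linarith⟩, ⟨by linarith, by linarith⟩⟩

lemma sum_h_nonneg (h₁ : θ₁ ∈ Set.Ioo 0 (π / 2)) (h₂ : θ₂ ∈ Set.Ioo 0 (π / 2))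
    (h₃ : θ₃ ∈ Set.Ioo 0 (π / 2)) (hsum : θ₁ + θ₂ + θ₃ = π) :
    0 ≤ hfun (π / Real.sqrt 12) θ₁ + hfun (π / Real.sqrt 12) θ₂ + hfun (π / Real.sqrt 12) θ₃ := by
  obtain ⟨hm1, hm2, hm3⟩ := mem_thirds h₁ h₂ h₃
  set f := hfun (π / Real.sqrt 12)
  have cvx := hconvex.convexOn
  have s1 : f ((θ₁ + θ₂) / 2) ≤ (f θ₁ + f θ₂) / 2 := mid_le cvx h₁ h₂
  have s2 : f ((θ₃ + π / 3) / 2) ≤ (f θ₃ + f (π / 3)) / 2 := mid_le cvx h₃ hm3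
  have s3 : f ((((θ₁ + θ₂) / 2) + ((θ₃ + π / 3) / 2)) / 2) ≤
      (f ((θ₁ + θ₂) / 2) + f ((θ₃ + π / 3) / 2)) / 2 := mid_le cvx hm1 hm2
  have hmid : (((θ₁ + θ₂) / 2) + ((θ₃ + π / 3) / 2)) / 2 = π / 3 := by linarith
  rw [hmid] at s3
  have h0 : f (π / 3) = 0 := hfun_pi_div_three
  rw [h0] at s3 s2
  linarith

lemma sum_h_pos (h₁ : θ₁ ∈ Set.Ioo 0 (π / 2)) (h₂ : θ₂ ∈ Set.Ioo 0 (π / 2))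
    (h₃ : θ₃ ∈ Set.Ioo 0 (π / 2)) (hsum : θ₁ + θ₂ + θ₃ = π)
    (hne : ¬(θ₁ = π / 3 ∧ θ₂ = π / 3 ∧ θ₃ = π / 3)) :
    0 < hfun (π / Real.sqrt 12) θ₁ + hfun (π / Real.sqrt 12) θ₂ + hfun (π / Real.sqrt 12) θ₃ := by
  obtain ⟨hm1, hm2, hm3⟩ := mem_thirds h₁ h₂ h₃
  set f := hfun (π / Real.sqrt 12) with hf
  have cvx := hconvex.convexOn
  have s3 : f ((((θ₁ + θ₂) / 2) + ((θ₃ + π / 3) / 2)) / 2) ≤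
      (f ((θ₁ + θ₂) / 2) + f ((θ₃ + π / 3) / 2)) / 2 := mid_le cvx hm1 hm2
  have hmid : (((θ₁ + θ₂) / 2) + ((θ₃ + π / 3) / 2)) / 2 = π / 3 := by linarith
  have h0 : f (π / 3) = 0 := hfun_pi_div_three
  rw [hmid, h0] at s3
  have hcase : θ₁ ≠ θ₂ ∨ θ₃ ≠ π / 3 := by
    by_contra hcon
    push_neg at hcon
    obtain ⟨e1, e2⟩ := hcon
    exact hne ⟨by linarith, by linarith, e2⟩
  rcases hcase with hc | hc
  · have s1 : f ((θ₁ + θ₂) / 2) < (f θ₁ + f θ₂) / 2 := mid_lt hconvex h₁ h₂ hc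
    have s2 : f ((θ₃ + π / 3) / 2) ≤ (f θ₃ + f (π / 3)) / 2 := mid_le cvx h₃ hm3
    rw [h0] at s2
    linarith
  · have s1 : f ((θ₁ + θ₂) / 2) ≤ (f θ₁ + f θ₂) / 2 := mid_le cvx h₁ h₂
    have s2 : f ((θ₃ + π / 3) / 2) < (f θ₃ + f (π / 3)) / 2 := mid_lt hconvex h₃ hm3 hc
    rw [h0] at s2
    linarith

end Jensen

theorem min_density_angles (θ₁ θ₂ θ₃ : ℝ)
    (h₁ : θ₁ ∈ Set.Ioo 0 (π / 2)) (h₂ : θ₂ ∈ Set.Ioo 0 (π / 2))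
    (h₃ : θ₃ ∈ Set.Ioo 0 (π / 2)) (hsum : θ₁ + θ₂ + θ₃ = π) :
    triDensity θ₁ θ₂ θ₃ ≥ π / Real.sqrt 12 ∧
      (triDensity θ₁ θ₂ θ₃ = π / Real.sqrt 12 ↔
        θ₁ = π / 3 ∧ θ₂ = π / 3 ∧ θ₃ = π / 3) := by
  set c := π / Real.sqrt 12 with hc
  have ht1 : 0 < tan θ₁ := Real.tan_pos_of_pos_of_lt_pi_div_two h₁.1 h₁.2
  have ht2 : 0 < tan θ₂ := Real.tan_pos_of_pos_of_lt_pi_div_two h₂.1 h₂.2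
  have ht3 : 0 < tan θ₃ := Real.tan_pos_of_pos_of_lt_pi_div_two h₃.1 h₃.2
  have hS : 0 < tan θ₁ + tan θ₂ + tan θ₃ := by linarith
  have hsplit : triDensity θ₁ θ₂ θ₃ - c =
      (hfun c θ₁ + hfun c θ₂ + hfun c θ₃) / (tan θ₁ + tan θ₂ + tan θ₃) := by
    unfold triDensity hfun
    field_simp
    ring
  have hge : triDensity θ₁ θ₂ θ₃ ≥ c := by
    have := sum_h_nonneg h₁ h₂ h₃ hsum
    have hdiv : 0 ≤ (hfun c θ₁ + hfun c θ₂ + hfun c θ₃) / (tan θ₁ + tan θ₂ + tan θ₃) :=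
      div_nonneg this (le_of_lt hS)
    linarith [hsplit ▸ hdiv]
  refine ⟨hge, ?_, ?_⟩
  · intro heq
    by_contra hne
    have hpos := sum_h_pos h₁ h₂ h₃ hsum hne
    have hdiv : 0 < (hfun c θ₁ + hfun c θ₂ + hfun c θ₃) / (tan θ₁ + tan θ₂ + tan θ₃) :=
      div_pos hpos hS
    rw [← hsplit, heq] at hdiv
    simp at hdiv
  · rintro ⟨e1, e2, e3⟩
    subst e1; subst e2; subst e3
    unfold triDensity
    have h3 : (0:ℝ) < Real.sqrt 3 := Real.sqrt_pos.mpr (by norm_num)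
    have hsq : Real.sqrt 3 ^ 2 = 3 := Real.sq_sqrt (by norm_num)
    rw [Real.tan_pi_div_three, hc, sqrt12_eq]
    field_simp
    nlinarith [hsq]
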